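/- Let α, β ∈ ℝ and define the polynomials Q3(t) = (4/3)t³ + α t² + (α²/4) t + β and Q4(t) = (4/3)t⁴ + (4/3)α t³ + (α²/2) t² + ((α³ − 16β)/8) t + (α⁴ − 32 α β)/64. Then on any open interval I ⊆ ℝ where Q3 > 0 and Q4 > 0, the pair f(t) = ln Q3(t), g(t) = ln Q4(t) satisfies the V1 truncated system (1/4)·f''(t) = −e^{g(t) − 2 f(t)} and (1/4)·g''(t) = −e^{−2 g(t) + 2 f(t)} for all t ∈ I. (This is the two-parameter family 'Set A' of explicit solutions.) -/

import Mathlib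

private lemma setA_log_second_deriv (Q Q' Q'' : ℝ → ℝ)
    (hQ : ∀ x, HasDerivAt Q (Q' x) x) (hQ' : ∀ x, HasDerivAt Q' (Q'' x) x)
    (a b : ℝ) (hpos : ∀ x ∈ Set.Ioo a b, 0 < Q x)
    (F : ℝ → ℝ) (hF : F = fun t => Real.log (Q t))
    (t : ℝ) (ht : t ∈ Set.Ioo a b) :
    deriv (deriv F) t = (Q'' t * Q t - Q' t * Q' t) / (Q t)^2 := by
  have hne : ∀ x ∈ Set.Ioo a b, Q x ≠ 0 := fun x hx => (hpos x hx).ne'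
  have hders : ∀ x ∈ Set.Ioo a b, deriv F x = Q' x / Q x := by
    intro x hx
    have : HasDerivAt F (Q' x / Q x) x := by
      rw [hF]; exact (hQ x).log (hne x hx)
    exact this.deriv
  have hev : deriv F =ᶠ[nhds t] fun x => Q' x / Q x :=
    Filter.eventually_of_mem (isOpen_Ioo.mem_nhds ht) hders
  rw [hev.deriv_eq]
  have : HasDerivAt (fun x => Q' x / Q x)
      ((Q'' t * Q t - Q' t * Q' t) / (Q t)^2) t :=
    (hQ' t).div (hQ t) (hne t ht)
  exact this.deriv

theorem V1_truncation_setA_solution (α β : ℝ)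
    (Q3 Q4 : ℝ → ℝ)
    (hQ3 : Q3 = fun t => (4/3) * t^3 + α * t^2 + (α^2/4) * t + β)
    (hQ4 : Q4 = fun t => (4/3) * t^4 + (4/3) * α * t^3 + (α^2/2) * t^2
      + ((α^3 - 16 * β)/8) * t + (α^4 - 32 * α * β)/64)
    (a b : ℝ) (hpos : ∀ t ∈ Set.Ioo a b, 0 < Q3 t ∧ 0 < Q4 t)
    (f g : ℝ → ℝ) (hf : f = fun t => Real.log (Q3 t)) (hg : g = fun t => Real.log (Q4 t)) :
    ∀ t ∈ Set.Ioo a b,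
      (1/4) * deriv (deriv f) t = -Real.exp (g t - 2 * f t) ∧
      (1/4) * deriv (deriv g) t = -Real.exp (-(2 * g t) + 2 * f t) := by
  have h3 : ∀ x : ℝ, HasDerivAt Q3 (4 * x^2 + 2 * α * x + α^2/4) x := by
    intro x
    rw [hQ3]
    have h := ((((hasDerivAt_pow 3 x).const_mul ((4:ℝ)/3)).add
      ((hasDerivAt_pow 2 x).const_mul α)).add
      ((hasDerivAt_id x).const_mul (α^2/4))).add_const β
    refine h.congr_deriv ?_
    push_cast; ring
  have h3' : ∀ x : ℝ, HasDerivAt (fun x => 4 * x^2 + 2 * α * x + α^2/4)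
      (8 * x + 2 * α) x := by
    intro x
    have h := (((hasDerivAt_pow 2 x).const_mul (4:ℝ)).add
      ((hasDerivAt_id x).const_mul (2 * α))).add_const (α^2/4)
    refine h.congr_deriv ?_
    push_cast; ring
  have h4 : ∀ x : ℝ, HasDerivAt Q4
      ((16/3) * x^3 + 4 * α * x^2 + α^2 * x + (α^3 - 16 * β)/8) x := by
    intro x
    rw [hQ4]
    have h := (((((hasDerivAt_pow 4 x).const_mul ((4:ℝ)/3)).add
      ((hasDerivAt_pow 3 x).const_mul ((4/3) * α))).add
      ((hasDerivAt_pow 2 x).const_mul (α^2/2))).add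
      ((hasDerivAt_id x).const_mul ((α^3 - 16 * β)/8))).add_const
      ((α^4 - 32 * α * β)/64)
    refine h.congr_deriv ?_
    push_cast; ring
  have h4' : ∀ x : ℝ, HasDerivAt (fun x => (16/3) * x^3 + 4 * α * x^2 + α^2 * x + (α^3 - 16 * β)/8)
      (16 * x^2 + 8 * α * x + α^2) x := by
    intro x
    have h := ((((hasDerivAt_pow 3 x).const_mul ((16:ℝ)/3)).add
      ((hasDerivAt_pow 2 x).const_mul (4 * α))).add
      ((hasDerivAt_id x).const_mul (α^2))).add_const ((α^3 - 16 * β)/8)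
    refine h.congr_deriv ?_
    push_cast; ring
  intro t ht
  obtain ⟨hp3, hp4⟩ := hpos t ht
  have hd3 := setA_log_second_deriv Q3 _ _ h3 h3' a b (fun x hx => (hpos x hx).1) f hf t ht
  have hd4 := setA_log_second_deriv Q4 _ _ h4 h4' a b (fun x hx => (hpos x hx).2) g hg t ht
  have hexp1 : Real.exp (g t - 2 * f t) = Q4 t / (Q3 t)^2 := by
    rw [hf, hg, Real.exp_sub, Real.exp_log hp4]
    congr 1
    rw [show (2 : ℝ) * Real.log (Q3 t) = Real.log ((Q3 t)^2) by
      rw [Real.log_pow]; push_cast; ring]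
    exact Real.exp_log (pow_pos hp3 2)
  have hexp2 : Real.exp (-(2 * g t) + 2 * f t) = (Q3 t)^2 / (Q4 t)^2 := by
    rw [hf, hg, ← sub_eq_neg_add, Real.exp_sub]
    rw [show (2 : ℝ) * Real.log (Q3 t) = Real.log ((Q3 t)^2) by
      rw [Real.log_pow]; push_cast; ring]
    rw [show (2 : ℝ) * Real.log (Q4 t) = Real.log ((Q4 t)^2) by
      rw [Real.log_pow]; push_cast; ring]
    rw [Real.exp_log (pow_pos hp3 2), Real.exp_log (pow_pos hp4 2)]
  have hQ3t : (4/3) * t^3 + α * t^2 + (α^2/4) * t + β = Q3 t := by rw [hQ3]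
  have hQ4t : (4/3) * t^4 + (4/3) * α * t^3 + (α^2/2) * t^2
      + ((α^3 - 16 * β)/8) * t + (α^4 - 32 * α * β)/64 = Q4 t := by rw [hQ4]
  constructor
  · rw [hd3, hexp1]
    have key : (8 * t + 2 * α) * Q3 t - (4 * t^2 + 2 * α * t + α^2/4) * (4 * t^2 + 2 * α * t + α^2/4)
        = -4 * Q4 t := by
      rw [← hQ3t, ← hQ4t]; ring
    rw [key]; ring
  · rw [hd4, hexp2]
    have key : (16 * t^2 + 8 * α * t + α^2) * Q4 t
        - ((16/3) * t^3 + 4 * α * t^2 + α^2 * t + (α^3 - 16 * β)/8)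
          * ((16/3) * t^3 + 4 * α * t^2 + α^2 * t + (α^3 - 16 * β)/8)
        = -4 * (Q3 t)^2 := by
      rw [← hQ3t, ← hQ4t]; ring
    rw [key]; ring
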